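/- Every proper 3-coloring of an odd cycle C_n admits a colorful vertex, i.e., a vertex v_i with |{c(v_{i-1}), c(v_i), c(v_{i+1})}| = 3. -/

import Mathlib

open SimpleGraph Finset

/-- A proper `k`-coloring of a simple graph: adjacent vertices get distinct colors. -/
def properColoring {V : Type*} (G : SimpleGraph V) (k : ℕ) (c : V → Fin k) : Prop :=
  ∀ ⦃v w : V⦄, G.Adj v w → c v ≠ c w

/-- `S` is a determining set for `(G, c)`: `c` is the unique proper `k`-coloring
agreeing with `c` on `S`. -/
def Determining {V : Type*} (G : SimpleGraph V) {k : ℕ} (c : V → Fin k) (S : Finset V) : Prop :=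
  ∀ c' : V → Fin k, properColoring G k c' → (∀ v ∈ S, c' v = c v) → c' = c

/-- A critical set: an inclusion-minimal determining set. -/
def CriticalSet {V : Type*} (G : SimpleGraph V) {k : ℕ} (c : V → Fin k) (S : Finset V) : Prop :=
  Determining G c S ∧ ∀ T : Finset V, T ⊂ S → ¬ Determining G c T

/-- The cycle graph on `Fin n`, with `i` adjacent to `i ± 1` (mod `n`). -/
def cycGraph (n : ℕ) [NeZero n] : SimpleGraph (Fin n) :=
  SimpleGraph.fromRel (fun i j => i + 1 = j)

/-- A vertex is colorful if every color appears on its closed neighborhood. -/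
def Colorful {V : Type*} (G : SimpleGraph V) {k : ℕ} (c : V → Fin k) (v : V) : Prop :=
  ∀ a : Fin k, ∃ w : V, (w = v ∨ G.Adj v w) ∧ c w = a

/-- `G` is uniquely `k`-colorable: any two proper `k`-colorings differ by a permutation
of the colors. -/
def UniquelyColorable {V : Type*} (G : SimpleGraph V) (k : ℕ) : Prop :=
  ∀ c c' : V → Fin k, properColoring G k c → properColoring G k c' →
    ∃ π : Equiv.Perm (Fin k), c' = π ∘ c

theorem stmt9 (n : ℕ) [NeZero n] (hn : Odd n) (h3 : 3 ≤ n)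
    (c : Fin n → Fin 3) (hc : properColoring (cycGraph n) 3 c) :
    ∃ i : Fin n, c (i - 1) ≠ c i ∧ c i ≠ c (i + 1) ∧ c (i - 1) ≠ c (i + 1) := by
  open Fin.CommRing Fin.NatCast in
  have hone : (1 : Fin n) ≠ 0 := by
    simp [Fin.ext_iff, Fin.val_one']
    omega
  have hadj : ∀ i : Fin n, (cycGraph n).Adj i (i + 1) := by
    intro i
    refine ⟨?_, Or.inl rfl⟩
    intro h
    apply hone
    have : i + 1 = i + 0 := by rw [add_zero]; exact h.symm
    exact add_left_cancel this
  have hne : ∀ i : Fin n, c i ≠ c (i + 1) := fun i => hc (hadj i)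
  by_contra h
  push_neg at h
  have hstep : ∀ i : Fin n, c i = c (i + 2) := by
    intro i
    have := h (i + 1)
    have e1 : i + 1 - 1 = i := by ring
    have e2 : i + 1 + 1 = i + 2 := by ring
    rw [e1, e2] at this
    exact this (hne i) (by have := hne (i + 1); rwa [e2] at this)
  have hiter : ∀ (k : ℕ) (i : Fin n), c (i + 2 * (k : Fin n)) = c i := by
    intro k
    induction k with
    | zero => intro i; simp
    | succ m ih =>
      intro i
      have : i + 2 * ((m + 1 : ℕ) : Fin n) = (i + 2) + 2 * (m : Fin n) := by
        push_cast; ring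
      rw [this, ih, ← hstep]
  have hkey : (2 * ((((n + 1) / 2 : ℕ)) : Fin n) : Fin n) = 1 := by
    have h2 : 2 * ((n + 1) / 2) = n + 1 := by
      obtain ⟨m, hm⟩ := hn; omega
    calc (2 * ((((n + 1) / 2 : ℕ)) : Fin n) : Fin n)
        = ((2 * ((n + 1) / 2) : ℕ) : Fin n) := by push_cast; ring
      _ = ((n + 1 : ℕ) : Fin n) := by rw [h2]
      _ = 1 := by push_cast; simp
  have := hiter ((n + 1) / 2) 0
  rw [hkey] at this
  exact hne 0 (by simpa using this.symm)
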